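/- Assume S is infinite, A is irreducible, and for each i ∈ S the set {j ∈ S : A_{ij} > −∞} is finite. Then the set of right eigenvalues of A is {λ ∈ ℝ : λ ≥ ρ(A)}. -/

import Mathlib

open Filter Topology

noncomputable section

namespace MaxPlus

variable {S : Type*}

/-- Weight of the path `p 0, p 1, ..., p n` for the kernel `A`. -/
def pathWeight (A : S → S → EReal) (p : ℕ → S) (n : ℕ) : EReal :=
  ∑ k ∈ Finset.range n, A (p k) (p (k + 1))

/-- The max-plus star kernel `A*`: supremum of weights of paths of length `≥ 0`. -/
def star (A : S → S → EReal) (i j : S) : EReal :=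
  ⨆ (n : ℕ) (p : ℕ → S) (_ : p 0 = i ∧ p n = j), pathWeight A p n

/-- The max-plus kernel `A⁺`: supremum of weights of paths of length `≥ 1`. -/
def plus (A : S → S → EReal) (i j : S) : EReal :=
  ⨆ (n : ℕ) (_ : 1 ≤ n) (p : ℕ → S) (_ : p 0 = i ∧ p n = j), pathWeight A p n

/-- `π` is a left super-harmonic row vector (with full support, being real valued). -/
def LeftSuperharmonic (A : S → S → EReal) (π : S → ℝ) : Prop :=
  ∀ j, (⨆ i, ((π i : EReal) + A i j)) ≤ (π j : EReal)

/-- The Martin kernel `K_{ij} = A*_{ij} - π_j`. -/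
def K (A : S → S → EReal) (π : S → ℝ) (i j : S) : EReal :=
  star A i j - (π j : EReal)

/-- `K♭_{ij} = A⁺_{ij} - π_j`. -/
def Kflat (A : S → S → EReal) (π : S → ℝ) (i j : S) : EReal :=
  plus A i j - (π j : EReal)

/-- The set `𝒦` of columns of the Martin kernel. -/
def kerCols (A : S → S → EReal) (π : S → ℝ) : Set (S → EReal) :=
  Set.range fun j => fun i => K A π i j

/-- The Martin space `ℳ`: closure of `𝒦` in the product topology. -/
def martin (A : S → S → EReal) (π : S → ℝ) : Set (S → EReal) :=
  closure (kerCols A π)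

/-- `μ_u(w)`: the limsup of `π_j + u_j` as `K_{·j} → w`. -/
def mu (A : S → S → EReal) (π : S → ℝ) (u : S → EReal) (w : S → EReal) : EReal :=
  ⨅ (W : Set (S → EReal)) (_ : W ∈ 𝓝 w),
    ⨆ (j : S) (_ : (fun i => K A π i j) ∈ W), ((π j : EReal) + u j)

/-- `w♭_i`: the liminf of `K♭_{ij}` as `K_{·j} → w`. -/
def flat (A : S → S → EReal) (π : S → ℝ) (w : S → EReal) (i : S) : EReal :=
  ⨆ (W : Set (S → EReal)) (_ : W ∈ 𝓝 w),
    ⨅ (j : S) (_ : (fun i' => K A π i' j) ∈ W), Kflat A π i j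

/-- The kernel `H(z,w) = μ_w(z)`. -/
def H (A : S → S → EReal) (π : S → ℝ) (z w : S → EReal) : EReal := mu A π w z

/-- The kernel `H♭(z,w) = μ_{w♭}(z)`. -/
def Hflat (A : S → S → EReal) (π : S → ℝ) (z w : S → EReal) : EReal :=
  mu A π (flat A π w) z

/-- The minimal Martin space `ℳᵐ = {w ∈ ℳ : H♭(w,w) = 0}`. -/
def martinMin (A : S → S → EReal) (π : S → ℝ) : Set (S → EReal) :=
  {w | w ∈ martin A π ∧ Hflat A π w w = 0}

/-- The maximal circuit mean `ρ(A)`. -/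
def maxCircuitMean (A : S → S → EReal) : EReal :=
  ⨆ (k : ℕ) (_ : 1 ≤ k) (p : ℕ → S) (_ : p k = p 0),
    (((k : ℝ)⁻¹ : ℝ) : EReal) * pathWeight A p k

/-- `α`-almost-geodesic with respect to the left super-harmonic vector `π`. -/
def IsAlmostGeodesic (A : S → S → EReal) (π : S → ℝ) (x : ℕ → S) : Prop :=
  ∃ α : ℝ, 0 ≤ α ∧ ∀ k : ℕ,
    (π (x k) : EReal) ≤ (α : EReal) + (π (x 0) : EReal) + pathWeight A x k

/-- The set `𝒮` of `π`-integrable super-harmonic vectors. -/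
def Sset (A : S → S → EReal) (π : S → ℝ) : Set (S → EReal) :=
  {u | (∀ i, u i ≠ ⊤) ∧ (∀ i, (⨆ j, A i j + u j) ≤ u i) ∧
    (⨆ j, ((π j : EReal) + u j)) < ⊤}

/-- The set `ℋ` of `π`-integrable harmonic vectors. -/
def Hset (A : S → S → EReal) (π : S → ℝ) : Set (S → EReal) :=
  {u | (∀ i, u i ≠ ⊤) ∧ (∀ i, (⨆ j, A i j + u j) = u i) ∧
    (⨆ j, ((π j : EReal) + u j)) < ⊤}

/-- A vector is normalised if `sup_j (π_j + u_j) = 0`. -/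
def Normalised (π : S → ℝ) (u : S → EReal) : Prop :=
  (⨆ j, ((π j : EReal) + u j)) = 0

/-- `ξ` is an extremal generator of `V`. -/
def ExtremalGen (V : Set (S → EReal)) (ξ : S → EReal) : Prop :=
  ξ ∈ V ∧ ξ ≠ (fun _ => (⊥ : EReal)) ∧
    ∀ u v, u ∈ V → v ∈ V → ξ = (fun i => u i ⊔ v i) → ξ = u ∨ ξ = v

end MaxPlus
namespace MaxPlus

/-- `A` is irreducible: any two nodes are joined by a path of length `≥ 1` all of whose
arcs have weight `> −∞`. -/
def MPIrreducible {S : Type*} (A : S → S → EReal) : Prop :=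
  ∀ i j : S, ∃ (n : ℕ) (p : ℕ → S), 1 ≤ n ∧ p 0 = i ∧ p n = j ∧
    ∀ k < n, A (p k) (p (k + 1)) ≠ ⊥

/-- `lam` is a right eigenvalue of `A`: `Au = lam + u` for some `u : S → ℝ ∪ {−∞}` not
identically `−∞`. -/
def IsRightEigenvalue {S : Type*} (A : S → S → EReal) (lam : ℝ) : Prop :=
  ∃ u : S → EReal, (∀ i, u i ≠ ⊤) ∧ u ≠ (fun _ => (⊥ : EReal)) ∧
    ∀ i, (⨆ j, A i j + u j) = (lam : EReal) + u i

section AuxProofs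
variable {S : Type*}

def addRealIso (r : ℝ) : EReal ≃o EReal where
  toFun x := x + (r : EReal)
  invFun x := x - (r : EReal)
  left_inv _ := EReal.add_sub_cancel_right
  right_inv _ := EReal.sub_add_cancel
  map_rel_iff' := (EReal.addLECancellable_coe r).add_le_add_iff_right

lemma iSup_add_real {ι : Sort*} (f : ι → EReal) (r : ℝ) :
    (⨆ i, f i) + (r : EReal) = ⨆ i, f i + (r : EReal) :=
  (addRealIso r).map_iSup f

lemma ereal_add_ne_top {x y : EReal} (hx : x ≠ ⊤) (hy : y ≠ ⊤) : x + y ≠ ⊤ := by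
  induction x <;> induction y <;> simp_all [EReal.add_bot, EReal.bot_add, ← EReal.coe_add]

lemma ereal_add_ne_bot {x y : EReal} (hx : x ≠ ⊥) (hy : y ≠ ⊥) : x + y ≠ ⊥ := by
  induction x <;> induction y <;> simp_all [← EReal.coe_add]

lemma coe_sum {ι : Type*} (s : Finset ι) (f : ι → ℝ) :
    ((∑ i ∈ s, f i : ℝ) : EReal) = ∑ i ∈ s, (f i : EReal) :=
  map_sum (⟨⟨(↑), EReal.coe_zero⟩, EReal.coe_add⟩ : ℝ →+ EReal) f s

lemma nsmul_coe (n : ℕ) (r : ℝ) : n • (r : EReal) = ((n * r : ℝ) : EReal) := by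
  induction n with
  | zero => simp
  | succ n ih => rw [succ_nsmul, ih, ← EReal.coe_add]; norm_cast; push_cast; ring

lemma pathWeight_ne_top {A : S → S → EReal} (hA : ∀ i j, A i j ≠ ⊤) (p : ℕ → S) (n : ℕ) :
    pathWeight A p n ≠ ⊤ := by
  induction n with
  | zero => simp [pathWeight]
  | succ n ih =>
    rw [pathWeight, Finset.sum_range_succ]
    exact ereal_add_ne_top ih (hA _ _)

lemma pathWeight_ne_bot {A : S → S → EReal} {p : ℕ → S} {n : ℕ}
    (h : ∀ k < n, A (p k) (p (k+1)) ≠ ⊥) : pathWeight A p n ≠ ⊥ := by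
  induction n with
  | zero => simp [pathWeight]
  | succ n ih =>
    rw [pathWeight, Finset.sum_range_succ]
    exact ereal_add_ne_bot (ih fun k hk => h k (hk.trans (Nat.lt_succ_self n)))
      (h n (Nat.lt_succ_self n))

lemma pathWeight_add_const (A : S → S → EReal) (r : ℝ) (p : ℕ → S) (n : ℕ) :
    pathWeight (fun i j => A i j + (r : EReal)) p n
      = pathWeight A p n + ((n * r : ℝ) : EReal) := by
  rw [pathWeight, pathWeight, Finset.sum_add_distrib, Finset.sum_const, Finset.card_range,
    nsmul_coe]

def cat (p q : ℕ → S) (n : ℕ) : ℕ → S := fun t => if t < n then p t else q (t - n)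

lemma cat_weight (A : S → S → EReal) {p q : ℕ → S} {n m : ℕ} (h : p n = q 0) :
    pathWeight A (cat p q n) (n + m) = pathWeight A p n + pathWeight A q m := by
  have hlt : ∀ k < n, cat p q n k = p k := fun k hk => if_pos hk
  have hge : ∀ k, cat p q n (n + k) = q k := by
    intro k
    simp [cat, Nat.add_sub_cancel_left]
  rw [pathWeight, Finset.sum_range_add]
  congr 1
  · apply Finset.sum_congr rfl
    intro k hk
    rw [Finset.mem_range] at hk
    rw [hlt k hk]
    rcases eq_or_lt_of_le (Nat.succ_le_of_lt hk) with h1 | h1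
    · have : cat p q n (k+1) = q 0 := by rw [show k+1 = n + 0 from by omega, hge]
      rw [this, ← h, ← h1]
    · rw [hlt (k+1) h1]
  · apply Finset.sum_congr rfl
    intro k hk
    rw [hge, show n + k + 1 = n + (k+1) from by omega, hge]

lemma pathWeight_le_star (A : S → S → EReal) {p : ℕ → S} {n : ℕ} {i j : S}
    (h0 : p 0 = i) (hn : p n = j) : pathWeight A p n ≤ star A i j :=
  le_iSup_of_le n (le_iSup_of_le p (le_iSup_of_le ⟨h0, hn⟩ le_rfl))

lemma star_add_star_le (A : S → S → EReal) (i j k : S) :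
    star A i j + star A j k ≤ star A i k := by
  apply EReal.add_le_of_forall_lt
  intro a ha b hb
  rw [star, lt_iSup_iff] at ha hb
  obtain ⟨n, ha⟩ := ha
  rw [lt_iSup_iff] at ha
  obtain ⟨p, ha⟩ := ha
  rw [lt_iSup_iff] at ha
  obtain ⟨⟨hp0, hpn⟩, ha⟩ := ha
  obtain ⟨m, hb⟩ := hb
  rw [lt_iSup_iff] at hb
  obtain ⟨q, hb⟩ := hb
  rw [lt_iSup_iff] at hb
  obtain ⟨⟨hq0, hqm⟩, hb⟩ := hb
  calc a + b ≤ pathWeight A p n + pathWeight A q m := add_le_add ha.le hb.le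
    _ = pathWeight A (cat p q n) (n + m) := (cat_weight A (hpn.trans hq0.symm)).symm
    _ ≤ star A i k := by
      refine pathWeight_le_star A ?_ ?_
      · rcases Nat.eq_zero_or_pos n with h | h
        · subst h
          show (if (0:ℕ) < 0 then p 0 else q (0-0)) = i
          rw [if_neg (lt_irrefl 0)]
          rw [Nat.sub_self, hq0, ← hpn, hp0]
        · show (if 0 < n then p 0 else q (0-n)) = i
          rw [if_pos h, hp0]
      · show (if n + m < n then p (n+m) else q (n + m - n)) = k
        rw [if_neg (by omega), Nat.add_sub_cancel_left, hqm]

def cons (i : S) (q : ℕ → S) : ℕ → S := fun t => if t = 0 then i else q (t - 1)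

lemma cons_weight (A : S → S → EReal) (i : S) (q : ℕ → S) (n : ℕ) :
    pathWeight A (cons i q) (n + 1) = A i (q 0) + pathWeight A q n := by
  rw [pathWeight, Finset.sum_range_succ']
  have h0 : A (cons i q 0) (cons i q 1) = A i (q 0) := by simp [cons]
  have hs : ∀ k, A (cons i q (k+1)) (cons i q (k+2)) = A (q k) (q (k+1)) := by
    intro k; simp [cons]
  rw [h0]
  rw [Finset.sum_congr rfl fun k _ => hs k]
  exact add_comm _ _

lemma tail_weight (A : S → S → EReal) (p : ℕ → S) (m : ℕ) :
    pathWeight A p (m + 1) = A (p 0) (p 1) + pathWeight A (fun t => p (t + 1)) m := by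
  rw [pathWeight, Finset.sum_range_succ']
  exact add_comm _ _

lemma star_rec (B : S → S → EReal) {i j : S} (hij : i ≠ j) :
    star B i j = ⨆ k, B i k + star B k j := by
  apply le_antisymm
  · refine iSup_le fun n => iSup_le fun p => iSup_le fun ⟨h0, hn⟩ => ?_
    cases n with
    | zero => exact absurd (h0.symm.trans hn) hij
    | succ m =>
      rw [tail_weight, h0]
      calc B i (p 1) + pathWeight B (fun t => p (t+1)) m
          ≤ B i (p 1) + star B (p 1) j :=
            add_le_add_right (pathWeight_le_star B (p := fun t => p (t+1)) rfl hn) _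
        _ ≤ ⨆ k, B i k + star B k j := le_iSup (fun k => B i k + star B k j) (p 1)
  · refine iSup_le fun k => ?_
    apply EReal.add_le_of_forall_lt
    intro a ha b hb
    rw [star, lt_iSup_iff] at hb
    obtain ⟨n, hb⟩ := hb
    rw [lt_iSup_iff] at hb
    obtain ⟨q, hb⟩ := hb
    rw [lt_iSup_iff] at hb
    obtain ⟨⟨hq0, hqn⟩, hb⟩ := hb
    calc a + b ≤ B i k + pathWeight B q n := add_le_add ha.le hb.le
      _ = pathWeight B (cons i q) (n+1) := by rw [cons_weight, hq0]
      _ ≤ star B i j := pathWeight_le_star B (by simp [cons]) (by simp [cons, hqn])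

lemma tendsto_finset_sup' {ι β : Type*} {l : Filter β} (T : Finset ι) :
    ∀ (hT : T.Nonempty) (f : ι → β → EReal) (g : ι → EReal),
    (∀ k ∈ T, Tendsto (f k) l (𝓝 (g k))) →
    Tendsto (fun j => T.sup' hT (fun k => f k j)) l (𝓝 (T.sup' hT g)) := by
  induction T using Finset.cons_induction with
  | empty => intro hT; exact absurd hT (by simp)
  | cons a s ha ih =>
    intro hT f g h
    rcases s.eq_empty_or_nonempty with rfl | hs
    · simpa using h a (by simp)
    · simp only [Finset.sup'_cons hs]
      exact (h a (Finset.mem_cons_self a s)).max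
        (ih hs f g fun k hk => h k (Finset.mem_cons_of_mem hk))

lemma tendsto_const_add {β : Type*} {l : Filter β} {f : β → EReal} {x : EReal}
    (r : EReal) (hr : r ≠ ⊤) (hf : Tendsto f l (𝓝 x)) :
    Tendsto (fun j => r + f j) l (𝓝 (r + x)) := by
  induction r with
  | bot => simpa [EReal.bot_add] using tendsto_const_nhds
  | coe r =>
    have hc : ContinuousAt (fun y : EReal => (r : EReal) + y) x := by
      have := EReal.continuousAt_add (p := ((r : EReal), x)) (by simp) (by simp)
      exact this.comp (Continuous.continuousAt (by continuity))
    exact hc.tendsto.comp hf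
  | top => exact absurd rfl hr

lemma iSup_eq_sup' {B : S → S → EReal} {i : S} (T : Finset S) (hT : T.Nonempty)
    (hsupp : ∀ k, k ∉ T → B i k = ⊥) (x : S → EReal) :
    (⨆ k, B i k + x k) = T.sup' hT (fun k => B i k + x k) := by
  apply le_antisymm
  · refine iSup_le fun k => ?_
    by_cases hk : k ∈ T
    · exact Finset.le_sup' (fun k => B i k + x k) hk
    · rw [hsupp k hk, EReal.bot_add]; exact bot_le
  · exact Finset.sup'_le hT _ fun k _ => le_iSup (fun k => B i k + x k) k

/-- The key construction: a harmonic vector when all circuits are nonpositive. -/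
lemma eigen_of_circuits_nonpos [Infinite S] {B : S → S → EReal}
    (hB : ∀ i j, B i j ≠ ⊤) (hirr : MPIrreducible B)
    (hfin : ∀ i, {j | B i j ≠ ⊥}.Finite)
    (hcirc : ∀ (k : ℕ) (p : ℕ → S), 1 ≤ k → p k = p 0 → pathWeight B p k ≤ 0) :
    ∃ u : S → EReal, (∀ i, u i ≠ ⊤) ∧ u ≠ (fun _ => ⊥) ∧
      ∀ i, (⨆ j, B i j + u j) = u i := by
  have hSne : Nonempty S := inferInstance
  obtain ⟨b⟩ := hSne
  -- star is never ⊥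
  have hsbot : ∀ i j, star B i j ≠ ⊥ := by
    intro i j
    obtain ⟨n, p, hn, h0, hn', harc⟩ := hirr i j
    have hW : pathWeight B p n ≠ ⊥ := pathWeight_ne_bot harc
    intro hs
    exact hW (le_bot_iff.mp (hs ▸ pathWeight_le_star B h0 hn'))
  -- star is never ⊤
  have hstop : ∀ i j, star B i j ≠ ⊤ := by
    intro i j hs
    obtain ⟨m, q, hm, hq0, hqm, hqarc⟩ := hirr j i
    have hWq1 : pathWeight B q m ≠ ⊥ := pathWeight_ne_bot hqarc
    have hWq2 : pathWeight B q m ≠ ⊤ := pathWeight_ne_top (fun i j => hB i j) q m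
    set w : ℝ := (pathWeight B q m).toReal with hw
    have hWq : pathWeight B q m = (w : EReal) := (EReal.coe_toReal hWq2 hWq1).symm
    have hlt : ((-w : ℝ) : EReal) < star B i j := hs ▸ EReal.coe_lt_top _
    rw [star, lt_iSup_iff] at hlt
    obtain ⟨n, hlt⟩ := hlt
    rw [lt_iSup_iff] at hlt
    obtain ⟨p, hlt⟩ := hlt
    rw [lt_iSup_iff] at hlt
    obtain ⟨⟨hp0, hpn⟩, hlt⟩ := hlt
    have hcirc' := hcirc (n + m) (cat p q n) (by omega) ?_
    · have heq : pathWeight B (cat p q n) (n + m)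
          = pathWeight B p n + pathWeight B q m := cat_weight B (hpn.trans hq0.symm)
      rw [heq, hWq] at hcirc'
      have : ((-w : ℝ) : EReal) + (w : EReal) < pathWeight B p n + (w : EReal) :=
        EReal.add_lt_add_right_coe hlt w
      rw [← EReal.coe_add] at this
      simp only [neg_add_cancel, EReal.coe_zero] at this
      exact absurd hcirc' (not_le.mpr this)
    · show cat p q n (n + m) = cat p q n 0
      have h1 : cat p q n (n + m) = i := by
        show (if n + m < n then p (n+m) else q (n + m - n)) = i
        rw [if_neg (by omega), Nat.add_sub_cancel_left, hqm]
      have h2 : cat p q n 0 = i := by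
        rcases Nat.eq_zero_or_pos n with h | h
        · subst h
          show (if (0:ℕ) < 0 then p 0 else q (0-0)) = i
          rw [if_neg (lt_irrefl 0), Nat.sub_self, hq0, ← hpn, hp0]
        · show (if 0 < n then p 0 else q (0-n)) = i
          rw [if_pos h, hp0]
      rw [h1, h2]
  -- the normalisation
  set c : S → ℝ := fun j => (star B b j).toReal with hc
  have hcval : ∀ j, star B b j = ((c j : ℝ) : EReal) :=
    fun j => (EReal.coe_toReal (hstop b j) (hsbot b j)).symm
  set KK : S → S → EReal := fun i j => star B i j - ((c j : ℝ) : EReal) with hKK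
  -- the ultrafilter
  have : (Filter.cofinite : Filter S).NeBot := Filter.cofinite_neBot
  set F : Ultrafilter S := Ultrafilter.of Filter.cofinite with hFdef
  have hF : (F : Filter S) ≤ Filter.cofinite := Ultrafilter.of_le _
  set u : S → EReal := fun i => (F.map (fun j => KK i j)).lim with hu
  have htend : ∀ i, Tendsto (fun j => KK i j) F (𝓝 (u i)) :=
    fun i => (F.map (fun j => KK i j)).le_nhds_lim
  -- u b = 0
  have hub : u b = 0 := by
    have h1 : Tendsto (fun _ : S => (0 : EReal)) F (𝓝 (u b)) := by
      refine (htend b).congr fun j => ?_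
      rw [hKK]
      simp only
      rw [hcval j, ← EReal.coe_sub]
      simp
    exact tendsto_nhds_unique h1 tendsto_const_nhds
  -- u i ≤ -c i
  have hut : ∀ i, u i ≤ ((-(c i) : ℝ) : EReal) := by
    intro i
    refine le_of_tendsto (htend i) (Filter.Eventually.of_forall fun j => ?_)
    have h1 : ((c i : ℝ) : EReal) + star B i j ≤ ((c j : ℝ) : EReal) := by
      rw [← hcval i, ← hcval j]
      exact star_add_star_le B b i j
    have h2 : star B i j ≤ ((c j - c i : ℝ) : EReal) := by
      rw [EReal.coe_sub]
      refine (EReal.le_sub_iff_add_le (.inl (EReal.coe_ne_bot _))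
        (.inl (EReal.coe_ne_top _))).mpr ?_
      rw [add_comm]; exact h1
    calc KK i j ≤ ((c j - c i : ℝ) : EReal) - ((c j : ℝ) : EReal) := by
          rw [hKK]; simp only
          rw [sub_eq_add_neg, sub_eq_add_neg]
          exact add_le_add_left h2 _
      _ = ((-(c i) : ℝ) : EReal) := by
          rw [← EReal.coe_sub]; norm_num
  have hutop : ∀ i, u i ≠ ⊤ := fun i =>
    ne_top_of_le_ne_top (EReal.coe_ne_top _) (hut i)
  -- harmonicity
  have heig : ∀ i, (⨆ j, B i j + u j) = u i := by
    intro i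
    -- the finite support
    set T : Finset S := (hfin i).toFinset with hT
    have hsupp : ∀ k, k ∉ T → B i k = ⊥ := by
      intro k hk
      by_contra h
      exact hk ((hfin i).mem_toFinset.mpr h)
    have hTne : T.Nonempty := by
      obtain ⟨n, p, hn, h0, hn', harc⟩ := hirr i i
      refine ⟨p 1, (hfin i).mem_toFinset.mpr ?_⟩
      have := harc 0 (by omega)
      rwa [h0] at this
    -- each summand converges
    have hterm : ∀ k ∈ T, Tendsto (fun j => B i k + KK k j) F (𝓝 (B i k + u k)) :=
      fun k _ => tendsto_const_add (B i k) (hB i k) (htend k)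
    have hbig := tendsto_finset_sup' T hTne (fun k j => B i k + KK k j)
      (fun k => B i k + u k) hterm
    -- eventual identification with K i ·
    have hev : ∀ᶠ j in (F : Filter S),
        T.sup' hTne (fun k => B i k + KK k j) = KK i j := by
      have hbase : ∀ᶠ j in (Filter.cofinite : Filter S), j ≠ i := by
        rw [Filter.eventually_cofinite]
        simp only [not_not]
        exact (Set.finite_singleton i).subset (fun x hx => hx)
      refine (hbase.filter_mono hF).mono fun j hj => ?_
      have step1 : T.sup' hTne (fun k => B i k + KK k j)
          = ⨆ k, B i k + KK k j := (iSup_eq_sup' T hTne hsupp (fun k => KK k j)).symm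
      have step2 : ∀ k, B i k + KK k j
          = (B i k + star B k j) + ((-(c j) : ℝ) : EReal) := by
        intro k
        rw [hKK]; simp only
        rw [sub_eq_add_neg, ← add_assoc, EReal.coe_neg]
      have step3 : (⨆ k, B i k + KK k j)
          = (⨆ k, B i k + star B k j) + ((-(c j) : ℝ) : EReal) := by
        rw [iSup_add_real]
        exact iSup_congr step2
      have step4 : (⨆ k, B i k + star B k j) = star B i j :=
        (star_rec B (Ne.symm hj)).symm
      rw [step1, step3, step4, hKK]
      simp only
      rw [sub_eq_add_neg, EReal.coe_neg]
    have hlim2 : Tendsto (fun j => KK i j) F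
        (𝓝 (T.sup' hTne (fun k => B i k + u k))) := by
      refine Tendsto.congr' ?_ hbig
      exact hev
    have : u i = T.sup' hTne (fun k => B i k + u k) :=
      tendsto_nhds_unique (htend i) hlim2
    rw [iSup_eq_sup' T hTne hsupp u]
    exact this.symm
  refine ⟨u, hutop, ?_, heig⟩
  intro h
  rw [h] at hub
  exact absurd hub (by simp)


/-- from a weight bound to a mean bound -/
lemma mean_le_of_weight_le {k : ℕ} (hk : 1 ≤ k) {W : EReal} (hWt : W ≠ ⊤) {lam : ℝ}
    (h : W ≤ ((k * lam : ℝ) : EReal)) :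
    (((k : ℝ)⁻¹ : ℝ) : EReal) * W ≤ (lam : EReal) := by
  have hkpos : (0:ℝ) < (k:ℝ)⁻¹ := by positivity
  rcases eq_or_ne W ⊥ with rfl | hWb
  · rw [EReal.coe_mul_bot_of_pos hkpos]; exact bot_le
  · lift W to ℝ using ⟨hWt, hWb⟩
    rw [← EReal.coe_mul, EReal.coe_le_coe_iff] at *
    have hk' : (0:ℝ) < (k:ℝ) := by positivity
    calc (k:ℝ)⁻¹ * W ≤ (k:ℝ)⁻¹ * (k * lam) := by
          apply mul_le_mul_of_nonneg_left h hkpos.le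
      _ = lam := by field_simp

/-- from a mean bound to a weight bound -/
lemma weight_le_of_mean_le {k : ℕ} (hk : 1 ≤ k) {W : EReal} (hWt : W ≠ ⊤) {lam : ℝ}
    (h : (((k : ℝ)⁻¹ : ℝ) : EReal) * W ≤ (lam : EReal)) :
    W ≤ ((k * lam : ℝ) : EReal) := by
  have hkpos : (0:ℝ) < (k:ℝ)⁻¹ := by positivity
  rcases eq_or_ne W ⊥ with rfl | hWb
  · exact bot_le
  · lift W to ℝ using ⟨hWt, hWb⟩
    rw [← EReal.coe_mul, EReal.coe_le_coe_iff] at *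
    have hk' : (0:ℝ) < (k:ℝ) := by positivity
    calc W = (k:ℝ) * ((k:ℝ)⁻¹ * W) := by field_simp
      _ ≤ (k:ℝ) * lam := by apply mul_le_mul_of_nonneg_left h hk'.le

lemma rho_le_of_eigen {A : S → S → EReal} (hA : ∀ i j, A i j ≠ ⊤)
    (hirr : MPIrreducible A) {lam : ℝ} (h : IsRightEigenvalue A lam) :
    maxCircuitMean A ≤ (lam : EReal) := by
  obtain ⟨u, hut, hune, heig⟩ := h
  have h0 : ∃ i0, u i0 ≠ ⊥ := by
    by_contra hcon
    push_neg at hcon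
    exact hune (funext fun i => hcon i)
  obtain ⟨i0, hi0⟩ := h0
  have hbot : ∀ i, u i ≠ ⊥ := by
    intro i
    obtain ⟨n, p, hn1, hp0, hpn, harc⟩ := hirr i i0
    have key : ∀ m k, k + m = n → u (p k) ≠ ⊥ := by
      intro m
      induction m with
      | zero => intro k hk; rw [show k = n from by omega, hpn]; exact hi0
      | succ m ih =>
        intro k hk
        have hk1 : u (p (k+1)) ≠ ⊥ := ih (k+1) (by omega)
        have harc' : A (p k) (p (k+1)) ≠ ⊥ := harc k (by omega)
        have hle : A (p k) (p (k+1)) + u (p (k+1)) ≤ (lam:EReal) + u (p k) := by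
          rw [← heig (p k)]
          exact le_iSup (fun j => A (p k) j + u j) (p (k+1))
        intro hukbot
        rw [hukbot, EReal.add_bot] at hle
        exact ereal_add_ne_bot harc' hk1 (le_bot_iff.mp hle)
    have := key n 0 (by omega)
    rwa [hp0] at this
  refine iSup_le fun k => iSup_le fun hk => iSup_le fun p => iSup_le fun hp => ?_
  refine mean_le_of_weight_le hk (pathWeight_ne_top hA p k) ?_
  set v : ℕ → ℝ := fun t => (u (p t)).toReal with hv
  have hval : ∀ t, u (p t) = ((v t : ℝ) : EReal) :=
    fun t => (EReal.coe_toReal (hut _) (hbot _)).symm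
  have hstep : ∀ t ∈ Finset.range k,
      A (p t) (p (t+1)) + u (p (t+1)) ≤ (lam:EReal) + u (p t) := by
    intro t _
    rw [← heig (p t)]
    exact le_iSup (fun j => A (p t) j + u j) (p (t+1))
  have hsum := Finset.sum_le_sum hstep
  rw [Finset.sum_add_distrib, Finset.sum_add_distrib] at hsum
  have hL : ∑ t ∈ Finset.range k, u (p (t+1))
      = ((∑ t ∈ Finset.range k, v (t+1) : ℝ) : EReal) := by
    rw [coe_sum]
    exact Finset.sum_congr rfl fun t _ => hval (t+1)
  have hR : ∑ t ∈ Finset.range k, u (p t)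
      = ((∑ t ∈ Finset.range k, v t : ℝ) : EReal) := by
    rw [coe_sum]
    exact Finset.sum_congr rfl fun t _ => hval t
  have hconst : ∑ _t ∈ Finset.range k, (lam : EReal) = ((k * lam : ℝ) : EReal) := by
    rw [Finset.sum_const, Finset.card_range, nsmul_coe]
  have hcyc : ∑ t ∈ Finset.range k, v (t+1) = ∑ t ∈ Finset.range k, v t := by
    have h1 := Finset.sum_range_succ' (fun t => v t) k
    have h2 := Finset.sum_range_succ (fun t => v t) k
    have hvk : v k = v 0 := by rw [hv]; simp only; rw [hp]
    rw [h2, hvk] at h1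
    linarith
  rw [hL, hR, hconst, hcyc] at hsum
  -- hsum : pathWeight + ↑s ≤ ↑(k lam) + ↑s
  set s : ℝ := ∑ t ∈ Finset.range k, v t
  rw [pathWeight]
  exact (EReal.addLECancellable_coe s).add_le_add_iff_right.mp hsum

end AuxProofs

/-- if `S` is infinite, `A` is irreducible and each row of `A` has finitely
many finite entries, then the set of right eigenvalues of `A` is `{λ : λ ≥ ρ(A)}`. -/
theorem rightEigenvalues_eq_Ici_rho {S : Type*} [Infinite S]
    (A : S → S → EReal) (hA : ∀ i j, A i j ≠ ⊤)
    (hirr : MPIrreducible A) (hfin : ∀ i, {j | A i j ≠ ⊥}.Finite) :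
    {lam : ℝ | IsRightEigenvalue A lam} =
      {lam : ℝ | maxCircuitMean A ≤ (lam : EReal)} := by
  ext lam
  simp only [Set.mem_setOf_eq]
  constructor
  · exact fun h => rho_le_of_eigen hA hirr h
  · intro hlam
    rw [maxCircuitMean] at hlam
    set B : S → S → EReal := fun i j => A i j + ((-lam : ℝ) : EReal) with hBdef
    have hB : ∀ i j, B i j ≠ ⊤ := fun i j => ereal_add_ne_top (hA i j) (EReal.coe_ne_top _)
    have hbotiff : ∀ i j, B i j ≠ ⊥ ↔ A i j ≠ ⊥ := by
      intro i j
      constructor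
      · intro h hA0
        rw [hBdef] at h
        simp only at h
        rw [hA0, EReal.bot_add] at h
        exact h rfl
      · intro h
        exact ereal_add_ne_bot h (EReal.coe_ne_bot _)
    have hirrB : MPIrreducible B := by
      intro i j
      obtain ⟨n, p, hn, h0, hn', harc⟩ := hirr i j
      exact ⟨n, p, hn, h0, hn', fun k hk => (hbotiff _ _).mpr (harc k hk)⟩
    have hfinB : ∀ i, {j | B i j ≠ ⊥}.Finite := by
      intro i
      have : {j | B i j ≠ ⊥} = {j | A i j ≠ ⊥} := Set.ext fun j => hbotiff i j
      rw [this]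
      exact hfin i
    have hcircB : ∀ (k : ℕ) (p : ℕ → S), 1 ≤ k → p k = p 0 → pathWeight B p k ≤ 0 := by
      intro k p hk hp
      have h1 : (((k : ℝ)⁻¹ : ℝ) : EReal) * pathWeight A p k ≤ (lam : EReal) := by
        refine le_trans ?_ hlam
        apply le_iSup_of_le k
        apply le_iSup_of_le hk
        apply le_iSup_of_le p
        exact le_iSup_of_le hp le_rfl
      have h2 : pathWeight A p k ≤ ((k * lam : ℝ) : EReal) :=
        weight_le_of_mean_le hk (pathWeight_ne_top hA p k) h1
      have h3 : pathWeight B p k = pathWeight A p k + (((k : ℝ) * (-lam) : ℝ) : EReal) :=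
        pathWeight_add_const A (-lam) p k
      rw [h3]
      calc pathWeight A p k + (((k : ℝ) * (-lam) : ℝ) : EReal)
          ≤ ((k * lam : ℝ) : EReal) + (((k : ℝ) * (-lam) : ℝ) : EReal) :=
            add_le_add_left h2 _
        _ = 0 := by
            rw [← EReal.coe_add, show ((k : ℝ) * lam + (k : ℝ) * (-lam) : ℝ) = 0 by ring,
              EReal.coe_zero]
    obtain ⟨u, hut, hune, heq⟩ := eigen_of_circuits_nonpos hB hirrB hfinB hcircB
    refine ⟨u, hut, hune, fun i => ?_⟩
    have h1 : (⨆ j, (A i j + u j) + ((-lam : ℝ) : EReal)) = u i := by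
      rw [← heq i]
      exact iSup_congr fun j => by rw [hBdef]; simp only; rw [add_right_comm]
    rw [← iSup_add_real] at h1
    have h2 : (⨆ j, A i j + u j) = u i + (lam : EReal) := by
      have h3 := congrArg (fun x => x + (lam : EReal)) h1
      rwa [show ((-lam : ℝ) : EReal) = -(lam : EReal) from EReal.coe_neg lam,
        ← sub_eq_add_neg, EReal.sub_add_cancel] at h3
    rw [h2, add_comm]


end MaxPlus
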